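/- Let (E, μ) be a measure space and let f and h be strictly positive integrable measurable functions on E such that u = log(f/h) is essentially bounded with ‖u‖_∞ ≤ B. Then the Kullback–Leibler distance satisfies the upper bound Δ(f; h) ≤ (1/2)·e^{B}·∫_E f·(log(f/h))² dμ. -/

import Mathlib

open MeasureTheory

private lemma aux2 (t : ℝ) (ht : t ≤ 0) : Real.exp t ≤ 1 + t + t ^ 2 / 2 := by
  have hanti : Antitone (fun t : ℝ => 1 + t + t ^ 2 / 2 - Real.exp t) := by
    apply antitone_of_hasDerivAt_nonpos (f' := fun t => 1 + t - Real.exp t)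
    · intro t
      have h1 : HasDerivAt (fun s : ℝ => 1 + s) 1 t := (hasDerivAt_id t).const_add 1
      have h2 : HasDerivAt (fun s : ℝ => s ^ 2 / 2) t t := by
        simpa using (hasDerivAt_pow 2 t).div_const 2
      exact (h1.add h2).sub (Real.hasDerivAt_exp t)
    · intro t
      have := Real.add_one_le_exp t
      simp only [Pi.zero_apply]
      linarith
  have h0 := hanti ht
  simp only [Real.exp_zero] at h0
  linarith

private lemma aux1 (v : ℝ) (hv : 0 ≤ v) :
    Real.exp v - 1 - v ≤ v ^ 2 / 2 * Real.exp v := by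
  set F' : ℝ → ℝ := fun v => v * Real.exp v + v ^ 2 / 2 * Real.exp v - Real.exp v + 1 with hF'def
  have hF' : ∀ w : ℝ, HasDerivAt
      (fun s : ℝ => s ^ 2 / 2 * Real.exp s - Real.exp s + 1 + s) (F' w) w := by
    intro w
    have h1 : HasDerivAt (fun s : ℝ => s ^ 2 / 2) w w := by
      simpa using (hasDerivAt_pow 2 w).div_const 2
    have h2 := h1.mul (Real.hasDerivAt_exp w)
    have h3 := ((h2.sub (Real.hasDerivAt_exp w)).add_const 1).add (hasDerivAt_id w)
    exact h3
  have hF'' : ∀ w : ℝ, HasDerivAt F' ((2 * w + w ^ 2 / 2) * Real.exp w) w := by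
    intro w
    have h1 : HasDerivAt (fun s : ℝ => s * Real.exp s) (Real.exp w + w * Real.exp w) w := by
      exact ((hasDerivAt_id w).mul (Real.hasDerivAt_exp w)).congr_deriv (by simp)
    have hp : HasDerivAt (fun s : ℝ => s ^ 2 / 2) w w := by
      simpa using (hasDerivAt_pow 2 w).div_const 2
    have h2 := hp.mul (Real.hasDerivAt_exp w)
    have h3 := ((h1.add h2).sub (Real.hasDerivAt_exp w)).add_const 1
    exact h3.congr_deriv (by ring)
  have hmonoF' : MonotoneOn F' (Set.Ici (0 : ℝ)) := by
    apply monotoneOn_of_hasDerivWithinAt_nonneg (convex_Ici 0)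
      (Continuous.continuousOn (by fun_prop))
      (f' := fun w => (2 * w + w ^ 2 / 2) * Real.exp w)
      (fun x _ => (hF'' x).hasDerivWithinAt)
    intro x hx
    rw [interior_Ici] at hx
    have hx0 : (0 : ℝ) < x := hx
    positivity
  have hF'0 : F' 0 = 0 := by simp [hF'def]
  have hF'nonneg : ∀ x ∈ interior (Set.Ici (0 : ℝ)), 0 ≤ F' x := by
    intro x hx
    rw [interior_Ici] at hx
    have := hmonoF' (Set.self_mem_Ici) (Set.mem_Ici.mpr hx.le) hx.le
    rwa [hF'0] at this
  have hmonoF : MonotoneOn (fun s : ℝ => s ^ 2 / 2 * Real.exp s - Real.exp s + 1 + s)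
      (Set.Ici (0 : ℝ)) := by
    exact monotoneOn_of_hasDerivWithinAt_nonneg (convex_Ici 0)
      (Continuous.continuousOn (by fun_prop))
      (fun x _ => (hF' x).hasDerivWithinAt) hF'nonneg
  have := hmonoF (Set.self_mem_Ici) (Set.mem_Ici.mpr hv) hv
  simp only [Real.exp_zero] at this
  nlinarith [this]

private lemma key (u B : ℝ) (hu : |u| ≤ B) :
    Real.exp (-u) - 1 + u ≤ 1 / 2 * Real.exp B * u ^ 2 := by
  have hB0 : 0 ≤ B := le_trans (abs_nonneg u) hu
  have h1 : (1 : ℝ) ≤ Real.exp B := by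
    rw [← Real.exp_zero]; exact Real.exp_le_exp.mpr hB0
  rcases le_total 0 u with h | h
  · have := aux2 (-u) (by linarith)
    nlinarith [sq_nonneg u]
  · have h2 : Real.exp (-u) ≤ Real.exp B := by
      apply Real.exp_le_exp.mpr
      have : |u| = -u := abs_of_nonpos h
      linarith
    have := aux1 (-u) (by linarith)
    nlinarith [sq_nonneg u, Real.exp_pos (-u)]

/-- Lemma A.1, upper bound: for strictly positive integrable intensities `f, h` with
`‖log(f/h)‖_∞ ≤ B`, the Kullback–Leibler distance
`Δ(f; h) = ∫ (f log(f/h) − f + h) dμ` satisfies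
`Δ(f; h) ≤ (1/2)·e^{B}·∫ f·(log(f/h))² dμ`. -/
theorem kl_upper_bound {E : Type*} [MeasurableSpace E] (μ : Measure E)
    (f h : E → ℝ) (hfm : Measurable f) (hhm : Measurable h)
    (hfpos : ∀ x, 0 < f x) (hhpos : ∀ x, 0 < h x)
    (hfint : Integrable f μ) (hhint : Integrable h μ)
    (B : ℝ) (hB : ∀ᵐ x ∂μ, |Real.log (f x / h x)| ≤ B) :
    ∫ x, (f x * Real.log (f x / h x) - f x + h x) ∂μ ≤
      (1 / 2) * Real.exp B * ∫ x, f x * (Real.log (f x / h x)) ^ 2 ∂μ := by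
  set u : E → ℝ := fun x => Real.log (f x / h x) with hu
  have hum : Measurable u := (hfm.div hhm).log
  have hfu : Integrable (fun x => u x * f x) μ :=
    hfint.bdd_mul hum.aestronglyMeasurable (by
      filter_upwards [hB] with x hx; simpa using hx)
  have hL : Integrable (fun x => f x * u x - f x + h x) μ := by
    have := (hfu.sub hfint).add hhint
    refine this.congr (Filter.Eventually.of_forall fun x => ?_)
    simp; ring
  have hR : Integrable (fun x => f x * u x ^ 2) μ := by
    have h2 : Integrable (fun x => (u x ^ 2) * f x) μ :=
      hfint.bdd_mul ((hum.pow_const 2).aestronglyMeasurable) (c := B ^ 2) (by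
        filter_upwards [hB] with x hx
        calc ‖u x ^ 2‖ = |u x| ^ 2 := by rw [Real.norm_eq_abs, ← sq_abs]; simp [abs_pow]
        _ ≤ B ^ 2 := pow_le_pow_left₀ (abs_nonneg _) hx 2)
    exact h2.congr (Filter.Eventually.of_forall fun x => by ring)
  have hmono : ∀ᵐ x ∂μ, f x * u x - f x + h x ≤
      1 / 2 * Real.exp B * (f x * u x ^ 2) := by
    filter_upwards [hB] with x hx
    have hfx := hfpos x
    have hhx := hhpos x
    have hexp : Real.exp (-(u x)) = h x / f x := by
      rw [Real.exp_neg, hu, Real.exp_log (div_pos hfx hhx), inv_div]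
    have hh : h x = f x * Real.exp (-(u x)) := by
      rw [hexp]; field_simp
    have hk := key (u x) B hx
    have := mul_le_mul_of_nonneg_left hk hfx.le
    nlinarith [this]
  calc ∫ x, (f x * u x - f x + h x) ∂μ
      ≤ ∫ x, 1 / 2 * Real.exp B * (f x * u x ^ 2) ∂μ :=
        integral_mono_ae hL (hR.const_mul _) hmono
    _ = 1 / 2 * Real.exp B * ∫ x, f x * u x ^ 2 ∂μ := integral_const_mul _ _
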